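/- arXiv:2508.17111 — 2 statements merged into one kernel-verified Lean document; each statement's English description precedes it below -/
import Mathlib

section
/- Let n ≥ 3 be an integer, ω₀ > 1, v̄ > 2·ln(n−1+ω₀), and set δ̂ = 2·ln(n−1+ω₀)/v̄. For each δ ∈ (δ̂, 1), let v*(δ) ∈ (v̄/(2−δ), v̄) be the unique solution of δ(2−δ)·v − 2(1−δ)·J̃(v) = δ·v̄, and let p₀*(δ) = (v̄ − δ·v*(δ))/(2(1−δ)). Then p₀*(δ) > v̄/2 for every δ ∈ (δ̂, 1), and the map δ ↦ p₀*(δ) is strictly increasing on (δ̂, 1). -/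
open Real Finset

/-- The expected social-network benefit at threshold `v` under uniform valuations. -/
noncomputable def Jt (n : ℕ) (ω₀ vbar : ℝ) (v : ℝ) : ℝ :=
  ∑ m ∈ Finset.range n, (Nat.choose (n - 1) m : ℝ) * Real.log ((m : ℝ) + ω₀) *
    (v / vbar) ^ m * (1 - v / vbar) ^ (n - 1 - m)

noncomputable def Gfun (n : ℕ) (ω₀ : ℝ) (x : ℝ) : ℝ :=
  ∑ m ∈ Finset.range n, (Nat.choose (n - 1) m : ℝ) * Real.log ((m : ℝ) + ω₀) *
    x ^ m * (1 - x) ^ (n - 1 - m)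

noncomputable def Dfun (N : ℕ) (ω₀ : ℝ) (x : ℝ) : ℝ :=
  ∑ m ∈ Finset.range N, ((Nat.choose N m * (N - m) : ℕ) : ℝ) *
    (Real.log ((m : ℝ) + 1 + ω₀) - Real.log ((m : ℝ) + ω₀)) * x ^ m * (1 - x) ^ (N - 1 - m)

lemma hasDerivAt_term (c : ℝ) (m k : ℕ) (x : ℝ) :
    HasDerivAt (fun t : ℝ => c * t ^ m * (1 - t) ^ k)
      (c * ((m : ℝ) * x ^ (m - 1)) * (1 - x) ^ k
        - c * x ^ m * ((k : ℝ) * (1 - x) ^ (k - 1))) x := by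
  have h2 : HasDerivAt (fun t : ℝ => 1 - t) (-1) x := by
    simpa using (hasDerivAt_const x (1:ℝ)).fun_sub (hasDerivAt_id x)
  have h1 : HasDerivAt (fun t : ℝ => (1 - t) ^ k) (-((k : ℝ) * (1 - x) ^ (k - 1))) x := by
    simpa [mul_comm, Function.comp_def] using (hasDerivAt_pow k (1 - x)).comp x h2
  have h3 : HasDerivAt (fun t : ℝ => c * t ^ m) (c * ((m : ℝ) * x ^ (m - 1))) x :=
    (hasDerivAt_pow m x).const_mul c
  have h := h3.fun_mul h1
  refine h.congr_deriv ?_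
  ring

lemma hasDerivAt_Gfun (N : ℕ) (ω₀ x : ℝ) :
    HasDerivAt (Gfun (N + 1) ω₀) (Dfun N ω₀ x) x := by
  have h : HasDerivAt (Gfun (N + 1) ω₀)
      (∑ m ∈ Finset.range (N + 1),
        ((Nat.choose N m : ℝ) * Real.log ((m : ℝ) + ω₀) * ((m : ℝ) * x ^ (m - 1)) * (1 - x) ^ (N - m)
          - (Nat.choose N m : ℝ) * Real.log ((m : ℝ) + ω₀) * x ^ m *
              (((N - m : ℕ) : ℝ) * (1 - x) ^ (N - m - 1)))) x := by
    have : Gfun (N + 1) ω₀ = fun t : ℝ => ∑ m ∈ Finset.range (N + 1),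
        (Nat.choose N m : ℝ) * Real.log ((m : ℝ) + ω₀) * t ^ m * (1 - t) ^ (N - m) := by
      funext t
      simp [Gfun, Nat.add_sub_cancel]
    rw [this]
    exact HasDerivAt.fun_sum fun m _ =>
      hasDerivAt_term ((Nat.choose N m : ℝ) * Real.log ((m : ℝ) + ω₀)) m (N - m) x
  convert h using 1
  rw [Finset.sum_sub_distrib, Finset.sum_range_succ', Finset.sum_range_succ]
  simp only [Nat.cast_zero, zero_mul, mul_zero, add_zero, Nat.sub_self, zero_mul, mul_zero]
  rw [← Finset.sum_sub_distrib]
  unfold Dfun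
  refine Finset.sum_congr rfl fun m hm => ?_
  have hm' : m < N := Finset.mem_range.mp hm
  have hc : ((Nat.choose N (m + 1) * (m + 1) : ℕ) : ℝ) = ((Nat.choose N m * (N - m) : ℕ) : ℝ) := by
    exact_mod_cast congrArg (Nat.cast (R := ℝ)) (Nat.choose_succ_right_eq N m)
  have he1 : N - (m + 1) = N - 1 - m := by omega
  have he2 : N - m - 1 = N - 1 - m := by omega
  rw [he1, he2]
  push_cast at hc ⊢
  linear_combination (-Real.log ((m : ℝ) + 1 + ω₀) * x ^ m * (1 - x) ^ (N - 1 - m)) * hc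

lemma Dfun_nonneg (N : ℕ) {ω₀ x : ℝ} (hω : 1 ≤ ω₀) (hx0 : 0 ≤ x) (hx1 : x ≤ 1) :
    0 ≤ Dfun N ω₀ x := by
  unfold Dfun
  apply Finset.sum_nonneg
  intro m _
  have h1 : (0:ℝ) < (m : ℝ) + ω₀ := by positivity
  have h2 : Real.log ((m : ℝ) + ω₀) ≤ Real.log ((m : ℝ) + 1 + ω₀) :=
    Real.log_le_log h1 (by linarith)
  have h3 : (0:ℝ) ≤ x ^ m := by positivity
  have h4 : (0:ℝ) ≤ (1 - x) ^ (N - 1 - m) := by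
    apply pow_nonneg; linarith
  have h5 : (0:ℝ) ≤ ((Nat.choose N m * (N - m) : ℕ) : ℝ) := Nat.cast_nonneg _
  have := sub_nonneg.mpr h2
  positivity

lemma Dfun_le (N : ℕ) {ω₀ x : ℝ} (hω : 1 ≤ ω₀) (hx0 : 0 < x) (hx1 : x ≤ 1) :
    Dfun N ω₀ x ≤ 1 / x := by
  have hT : Dfun N ω₀ x ≤
      ∑ m ∈ Finset.range N, ((Nat.choose N (m + 1) : ℕ) : ℝ) * x ^ m * (1 - x) ^ (N - 1 - m) := by
    unfold Dfun
    apply Finset.sum_le_sum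
    intro m _
    have h1 : (0:ℝ) < (m : ℝ) + ω₀ := by positivity
    have h2 : Real.log ((m : ℝ) + 1 + ω₀) - Real.log ((m : ℝ) + ω₀) ≤ 1 / ((m : ℝ) + 1) := by
      have hd : Real.log ((m : ℝ) + 1 + ω₀) - Real.log ((m : ℝ) + ω₀)
          = Real.log (((m : ℝ) + 1 + ω₀) / ((m : ℝ) + ω₀)) := by
        rw [Real.log_div (by positivity) (by positivity)]
      rw [hd]
      have := Real.log_le_sub_one_of_pos (x := ((m : ℝ) + 1 + ω₀) / ((m : ℝ) + ω₀)) (by positivity)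
      have heq : ((m : ℝ) + 1 + ω₀) / ((m : ℝ) + ω₀) - 1 = 1 / ((m : ℝ) + ω₀) := by
        field_simp; ring
      rw [heq] at this
      have h3 : 1 / ((m : ℝ) + ω₀) ≤ 1 / ((m : ℝ) + 1) := by
        apply one_div_le_one_div_of_le (by positivity); linarith
      linarith
    have hcc : ((Nat.choose N m * (N - m) : ℕ) : ℝ) = ((Nat.choose N (m + 1) : ℕ) : ℝ) * ((m : ℝ) + 1) := by
      rw [← Nat.choose_succ_right_eq]; push_cast; ring
    have hx3 : (0:ℝ) ≤ x ^ m := by positivity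
    have hx4 : (0:ℝ) ≤ (1 - x) ^ (N - 1 - m) := by apply pow_nonneg; linarith
    have hnn : (0:ℝ) ≤ ((Nat.choose N (m + 1) : ℕ) : ℝ) := Nat.cast_nonneg _
    have key : ((Nat.choose N m * (N - m) : ℕ) : ℝ) *
        (Real.log ((m : ℝ) + 1 + ω₀) - Real.log ((m : ℝ) + ω₀))
        ≤ ((Nat.choose N (m + 1) : ℕ) : ℝ) := by
      rw [hcc]
      have hm1 : (0:ℝ) < (m : ℝ) + 1 := by positivity
      calc ((Nat.choose N (m + 1) : ℕ) : ℝ) * ((m : ℝ) + 1) *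
            (Real.log ((m : ℝ) + 1 + ω₀) - Real.log ((m : ℝ) + ω₀))
          ≤ ((Nat.choose N (m + 1) : ℕ) : ℝ) * ((m : ℝ) + 1) * (1 / ((m : ℝ) + 1)) := by
            apply mul_le_mul_of_nonneg_left h2; positivity
        _ = ((Nat.choose N (m + 1) : ℕ) : ℝ) := by field_simp
    calc ((Nat.choose N m * (N - m) : ℕ) : ℝ) *
          (Real.log ((m : ℝ) + 1 + ω₀) - Real.log ((m : ℝ) + ω₀)) * x ^ m * (1 - x) ^ (N - 1 - m)
        ≤ ((Nat.choose N (m + 1) : ℕ) : ℝ) * x ^ m * (1 - x) ^ (N - 1 - m) := by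
          apply mul_le_mul_of_nonneg_right _ hx4
          exact mul_le_mul_of_nonneg_right key hx3
      _ = _ := rfl
  rw [le_div_iff₀ hx0]
  calc Dfun N ω₀ x * x
      ≤ (∑ m ∈ Finset.range N, ((Nat.choose N (m + 1) : ℕ) : ℝ) * x ^ m * (1 - x) ^ (N - 1 - m)) * x :=
        mul_le_mul_of_nonneg_right hT (le_of_lt hx0)
    _ = ∑ m ∈ Finset.range N, x ^ (m + 1) * (1 - x) ^ (N - (m + 1)) * ((Nat.choose N (m + 1) : ℕ) : ℝ) := by
        rw [Finset.sum_mul]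
        refine Finset.sum_congr rfl fun m hm => ?_
        have : N - 1 - m = N - (m + 1) := by omega
        rw [this]; ring
    _ ≤ ∑ k ∈ Finset.range (N + 1), x ^ k * (1 - x) ^ (N - k) * ((Nat.choose N k : ℕ) : ℝ) := by
        rw [Finset.sum_range_succ']
        have : (0:ℝ) ≤ x ^ 0 * (1 - x) ^ (N - 0) * ((Nat.choose N 0 : ℕ) : ℝ) := by
          apply mul_nonneg (mul_nonneg (by positivity) (pow_nonneg (by linarith) _)) (Nat.cast_nonneg _)
        linarith
    _ = (x + (1 - x)) ^ N := (add_pow x (1 - x) N).symm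
    _ = 1 := by norm_num

lemma G_lip (N : ℕ) {ω₀ x y : ℝ} (hω : 1 ≤ ω₀) (hx : 0 < x) (hxy : x ≤ y) (hy : y ≤ 1) :
    Gfun (N + 1) ω₀ x ≤ Gfun (N + 1) ω₀ y ∧
    Gfun (N + 1) ω₀ y - Gfun (N + 1) ω₀ x ≤ (y - x) / x := by
  have hdiff : ∀ t : ℝ, DifferentiableAt ℝ (Gfun (N + 1) ω₀) t :=
    fun t => (hasDerivAt_Gfun N ω₀ t).differentiableAt
  constructor
  · have hmono : MonotoneOn (Gfun (N + 1) ω₀) (Set.Icc x y) := by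
      apply monotoneOn_of_deriv_nonneg (convex_Icc x y)
      · exact fun t _ => (hdiff t).continuousAt.continuousWithinAt
      · exact fun t _ => (hdiff t).differentiableWithinAt
      · intro t ht
        rw [interior_Icc] at ht
        rw [(hasDerivAt_Gfun N ω₀ t).deriv]
        exact Dfun_nonneg N hω (by linarith [ht.1]) (by linarith [ht.2])
    exact hmono (Set.left_mem_Icc.mpr (le_trans hxy le_rfl)) (Set.right_mem_Icc.mpr hxy) hxy
  · set H : ℝ → ℝ := fun t => t / x - Gfun (N + 1) ω₀ t with hH
    have hHd : ∀ t : ℝ, HasDerivAt H (1 / x - Dfun N ω₀ t) t := by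
      intro t
      exact ((hasDerivAt_id t).div_const x).sub (hasDerivAt_Gfun N ω₀ t)
    have hmono : MonotoneOn H (Set.Icc x y) := by
      apply monotoneOn_of_deriv_nonneg (convex_Icc x y)
      · exact fun t _ => (hHd t).differentiableAt.continuousAt.continuousWithinAt
      · exact fun t _ => (hHd t).differentiableAt.differentiableWithinAt
      · intro t ht
        rw [interior_Icc] at ht
        rw [(hHd t).deriv]
        have h1 : Dfun N ω₀ t ≤ 1 / t := Dfun_le N hω (by linarith [ht.1]) (by linarith [ht.2])
        have h2 : 1 / t ≤ 1 / x := by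
          apply one_div_le_one_div_of_le hx (le_of_lt ht.1)
        linarith
    have := hmono (Set.left_mem_Icc.mpr hxy) (Set.right_mem_Icc.mpr hxy) hxy
    simp only [hH] at this
    have hx' : x ≠ 0 := ne_of_gt hx
    have : Gfun (N + 1) ω₀ y - Gfun (N + 1) ω₀ x ≤ y / x - x / x := by linarith
    rw [div_self hx'] at this
    have heq : (y - x) / x = y / x - 1 := by field_simp
    linarith [heq ▸ this]

set_option maxHeartbeats 1000000 in
/-- For `δ ∈ (δ̂, 1)` with `δ̂ = 2·ln(n−1+ω₀)/v̄`, let `v*(δ)` be the equilibrium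
valuation threshold and `p₀*(δ) = (v̄ − δ·v*(δ))/(2(1−δ))` the seller's uniform
price. Then `p₀*(δ) > v̄/2`, and `δ ↦ p₀*(δ)` is strictly increasing on `(δ̂, 1)`. -/
theorem stmt4 (n : ℕ) (hn : 3 ≤ n) (ω₀ vbar : ℝ) (hω : 1 < ω₀)
    (hv : 2 * Real.log ((n : ℝ) - 1 + ω₀) < vbar)
    (vstar : ℝ → ℝ)
    (hvs : ∀ δ ∈ Set.Ioo (2 * Real.log ((n : ℝ) - 1 + ω₀) / vbar) 1,
      vstar δ ∈ Set.Ioo (vbar / (2 - δ)) vbar ∧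
      δ * (2 - δ) * vstar δ - 2 * (1 - δ) * Jt n ω₀ vbar (vstar δ) = δ * vbar) :
    (∀ δ ∈ Set.Ioo (2 * Real.log ((n : ℝ) - 1 + ω₀) / vbar) 1,
      vbar / 2 < (vbar - δ * vstar δ) / (2 * (1 - δ))) ∧
    StrictMonoOn (fun δ => (vbar - δ * vstar δ) / (2 * (1 - δ)))
      (Set.Ioo (2 * Real.log ((n : ℝ) - 1 + ω₀) / vbar) 1) := by
  have hn3 : (3:ℝ) ≤ (n:ℝ) := by exact_mod_cast hn
  have hL1 : 1 < Real.log ((n : ℝ) - 1 + ω₀) := by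
    rw [Real.lt_log_iff_exp_lt (by linarith)]
    have := Real.exp_one_lt_d9
    linarith
  set L : ℝ := Real.log ((n : ℝ) - 1 + ω₀) with hLdef
  have hvb : 0 < vbar := by linarith
  have hδhat : 0 < 2 * L / vbar := by positivity
  have hprice : ∀ δ ∈ Set.Ioo (2 * L / vbar) 1,
      vbar / 2 < (vbar - δ * vstar δ) / (2 * (1 - δ)) := by
    intro δ hδ
    obtain ⟨⟨hl, hu⟩, _⟩ := hvs δ hδ
    have hδ0 : 0 < δ := lt_trans hδhat hδ.1
    have hδ1 : δ < 1 := hδ.2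
    rw [lt_div_iff₀ (by linarith)]
    linarith [mul_lt_mul_of_pos_left hu hδ0]
  refine ⟨hprice, ?_⟩
  intro δ₁ hδ₁ δ₂ hδ₂ h12
  show (vbar - δ₁ * vstar δ₁) / (2 * (1 - δ₁)) < (vbar - δ₂ * vstar δ₂) / (2 * (1 - δ₂))
  obtain ⟨⟨hv1l, hv1u⟩, hE1⟩ := hvs δ₁ hδ₁
  obtain ⟨⟨hv2l, hv2u⟩, hE2⟩ := hvs δ₂ hδ₂
  have hδ₁0 : 0 < δ₁ := lt_trans hδhat hδ₁.1
  have hδ₂0 : 0 < δ₂ := lt_trans hδ₁0 h12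
  have hδ₁1 : δ₁ < 1 := hδ₁.2
  have hδ₂1 : δ₂ < 1 := hδ₂.2
  have h1δ₁ : 0 < 1 - δ₁ := by linarith
  have h1δ₂ : 0 < 1 - δ₂ := by linarith
  have h2δ₁ : 0 < 2 - δ₁ := by linarith
  have h2δ₂ : 0 < 2 - δ₂ := by linarith
  have hδ₂vb : 2 < δ₂ * vbar := by
    have h := hδ₂.1
    rw [div_lt_iff₀ hvb] at h
    linarith
  set v₁ := vstar δ₁ with hv₁def
  set v₂ := vstar δ₂ with hv₂def
  have hv₁0 : 0 < v₁ := lt_trans (by positivity) hv1l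
  have hv₂0 : 0 < v₂ := lt_trans (by positivity) hv2l
  have hv1vb : vbar < (2 - δ₁) * v₁ := by rw [div_lt_iff₀ h2δ₁] at hv1l; linarith
  have hv2vb : vbar < (2 - δ₂) * v₂ := by rw [div_lt_iff₀ h2δ₂] at hv2l; linarith
  have hv1half : vbar / 2 < v₁ := by linarith [mul_pos hδ₁0 hv₁0, hv1vb]
  set p₁ : ℝ := (vbar - δ₁ * v₁) / (2 * (1 - δ₁)) with hp₁def
  set p₂ : ℝ := (vbar - δ₂ * v₂) / (2 * (1 - δ₂)) with hp₂def
  set J₁ : ℝ := Jt n ω₀ vbar v₁ with hJ₁def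
  set J₂ : ℝ := Jt n ω₀ vbar v₂ with hJ₂def
  have hp₁ : 2 * (1 - δ₁) * p₁ = vbar - δ₁ * v₁ := by rw [hp₁def]; field_simp
  have hp₂ : 2 * (1 - δ₂) * p₂ = vbar - δ₂ * v₂ := by rw [hp₂def]; field_simp
  have hp₁half : vbar / 2 < p₁ := hprice δ₁ hδ₁
  have hI₁ : (2 - δ₁) * p₁ + J₁ = vbar := by
    have hne : (2 * (1 - δ₁)) ≠ 0 := by positivity
    have h0 : 2 * (1 - δ₁) * ((2 - δ₁) * p₁ + J₁) = 2 * (1 - δ₁) * vbar := by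
      linear_combination (2 - δ₁) * hp₁ - hE1
    exact mul_left_cancel₀ hne h0
  have hI₂ : (2 - δ₂) * p₂ + J₂ = vbar := by
    have hne : (2 * (1 - δ₂)) ≠ 0 := by positivity
    have h0 : 2 * (1 - δ₂) * ((2 - δ₂) * p₂ + J₂) = 2 * (1 - δ₂) * vbar := by
      linear_combination (2 - δ₂) * hp₂ - hE2
    exact mul_left_cancel₀ hne h0
  -- express Jt via Gfun before making things opaque
  obtain ⟨N, rfl⟩ : ∃ N, n = N + 1 := ⟨n - 1, by omega⟩
  have hJtG1 : J₁ = Gfun (N + 1) ω₀ (v₁ / vbar) := hJ₁def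
  have hJtG2 : J₂ = Gfun (N + 1) ω₀ (v₂ / vbar) := hJ₂def
  clear_value v₁ v₂ p₁ p₂ J₁ J₂
  by_contra hcon
  push_neg at hcon
  have hJ : J₂ - J₁ = (δ₂ - δ₁) * p₁ + (2 - δ₂) * (p₁ - p₂) := by
    linear_combination hI₂ - hI₁
  have hJpos : 0 < J₂ - J₁ := by
    rw [hJ]
    have h1 : 0 < (δ₂ - δ₁) * p₁ := mul_pos (by linarith) (by linarith)
    have h2 : 0 ≤ (2 - δ₂) * (p₁ - p₂) := mul_nonneg (le_of_lt h2δ₂) (by linarith)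
    linarith
  have hωle : (1:ℝ) ≤ ω₀ := le_of_lt hω
  have hv12 : v₁ < v₂ := by
    by_contra h
    push_neg at h
    have hg := (G_lip N hωle (x := v₂ / vbar) (y := v₁ / vbar)
      (by positivity) (by gcongr) ((div_le_one hvb).mpr (le_of_lt hv1u))).1
    rw [← hJtG1, ← hJtG2] at hg
    linarith
  have hLip : (J₂ - J₁) * v₁ ≤ v₂ - v₁ := by
    have hg := (G_lip N hωle (x := v₁ / vbar) (y := v₂ / vbar)
      (by positivity) (by gcongr) ((div_le_one hvb).mpr (le_of_lt hv2u))).2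
    rw [← hJtG1, ← hJtG2] at hg
    have heq : (v₂ / vbar - v₁ / vbar) / (v₁ / vbar) = (v₂ - v₁) / v₁ := by
      rw [div_sub_div_same, div_div_div_cancel_right₀]
      exact ne_of_gt hvb
    rw [heq, le_div_iff₀ hv₁0] at hg
    linarith
  have hkey : ((δ₂ - δ₁) * p₁ + (2 - δ₂) * (p₁ - p₂)) * v₁ ≤ v₂ - v₁ := by
    rw [← hJ]; exact hLip
  have h2 : δ₁ * δ₂ * (v₂ - v₁) = (δ₂ - δ₁) * (2 * p₁ - vbar) + 2 * δ₁ * (1 - δ₂) * (p₁ - p₂) := by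
    linear_combination δ₁ * hp₂ - δ₂ * hp₁
  have h3 : δ₁ * δ₂ * (((δ₂ - δ₁) * p₁ + (2 - δ₂) * (p₁ - p₂)) * v₁) ≤
      (δ₂ - δ₁) * (2 * p₁ - vbar) + 2 * δ₁ * (1 - δ₂) * (p₁ - p₂) := by
    rw [← h2]
    exact mul_le_mul_of_nonneg_left hkey (mul_pos hδ₁0 hδ₂0).le
  have hδ₂p₁ : 1 < δ₂ * p₁ := by linarith [mul_lt_mul_of_pos_left hp₁half hδ₂0, hδ₂vb]
  have hs1 : vbar - v₁ < (1 - δ₁) * v₁ := by linarith [hv1vb]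
  have hs2 : (1 - δ₁) * v₁ < δ₂ * p₁ * ((1 - δ₁) * v₁) := by
    linarith [mul_lt_mul_of_pos_left hδ₂p₁ (mul_pos h1δ₁ hv₁0)]
  have hq1 : (1 - δ₁) * (2 * p₁ - vbar) = δ₁ * (vbar - v₁) := by linear_combination hp₁
  have hT1 : 2 * p₁ - vbar < δ₁ * δ₂ * v₁ * p₁ := by
    have hc : δ₁ * (vbar - v₁) < δ₁ * (δ₂ * p₁ * ((1 - δ₁) * v₁)) :=
      mul_lt_mul_of_pos_left (by linarith) hδ₁0
    rw [← hq1] at hc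
    have h4 : (1 - δ₁) * (2 * p₁ - vbar) < (1 - δ₁) * (δ₁ * δ₂ * v₁ * p₁) := by linarith [hc]
    exact lt_of_mul_lt_mul_left h4 (le_of_lt h1δ₁)
  have hδ₂v₁ : 1 < δ₂ * v₁ := by linarith [mul_lt_mul_of_pos_left hv1half hδ₂0, hδ₂vb]
  have hT2 : 2 * (1 - δ₂) ≤ δ₂ * v₁ * (2 - δ₂) := by
    linarith [mul_lt_mul_of_pos_right hδ₂v₁ h2δ₂, hδ₂0]
  have w1 : (δ₂ - δ₁) * (2 * p₁ - vbar) < (δ₂ - δ₁) * (δ₁ * δ₂ * v₁ * p₁) :=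
    mul_lt_mul_of_pos_left hT1 (by linarith)
  have w2 : 2 * δ₁ * (1 - δ₂) * (p₁ - p₂) ≤ δ₁ * (δ₂ * v₁ * (2 - δ₂)) * (p₁ - p₂) := by
    apply mul_le_mul_of_nonneg_right _ (by linarith)
    linarith [mul_le_mul_of_nonneg_left hT2 (le_of_lt hδ₁0)]
  linarith [h3, w1, w2]
end

section
/- Let n ≥ 2 be an integer, ω₀ > 1, δ ∈ (0,1], p₀ ≥ 0, v̄ > 0, and define Φ(v) = p₀ + J̃(v)/δ − v for v ∈ [0, v̄]. Then: (i) if p₀ < v̄ − ln(n−1+ω₀)/δ, then Φ has exactly one zero in [0, v̄], and this zero lies in the open interval (0, v̄); (ii) if p₀ > v̄ − ln(n−1+ω₀)/δ, then Φ has no zero in [0, v̄]; (iii) if p₀ = v̄ − ln(n−1+ω₀)/δ, then v̄ is the unique zero of Φ in [0, v̄]. -/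
open Real Finset

noncomputable def Bern (N : ℕ) (g : ℕ → ℝ) (p : ℝ) : ℝ :=
  ∑ m ∈ Finset.range (N+1), (N.choose m : ℝ) * g m * p ^ m * (1 - p) ^ (N - m)

lemma bern_continuous (N : ℕ) (g : ℕ → ℝ) : Continuous (Bern N g) := by
  unfold Bern
  exact continuous_finset_sum _ fun m _ => by fun_prop

lemma aux_pow_deriv (j m : ℕ) (p : ℝ) :
    HasDerivAt (fun p : ℝ => p ^ m * (1 - p) ^ j)
      ((m : ℝ) * p ^ (m-1) * (1-p) ^ j - (j : ℝ) * p ^ m * (1-p) ^ (j-1)) p := by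
  have h1 : HasDerivAt (fun p : ℝ => p ^ m) ((m:ℝ) * p ^ (m-1)) p := hasDerivAt_pow m p
  have h2 : HasDerivAt (fun p : ℝ => (1 - p) ^ j) (-((j:ℝ) * (1-p) ^ (j-1))) p := by
    have hb : HasDerivAt (fun p : ℝ => 1 - p) (-1) p := by
      exact (hasDerivAt_id' p).const_sub 1
    have h := (hasDerivAt_pow j (1 - p)).comp p hb
    exact h.congr_deriv (by ring)
  have h := h1.mul h2
  exact h.congr_deriv (by ring)

lemma bern_hasDerivAt (K : ℕ) (g : ℕ → ℝ) (p : ℝ) :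
    HasDerivAt (Bern (K+1) g)
      (((K:ℝ)+1) * Bern K (fun m => g (m+1) - g m) p) p := by
  have key : HasDerivAt (fun p : ℝ => ∑ m ∈ Finset.range (K+2),
        ((K+1).choose m : ℝ) * g m * (p ^ m * (1 - p) ^ (K+1-m)))
      (∑ m ∈ Finset.range (K+2), ((K+1).choose m : ℝ) * g m *
        ((m:ℝ) * p ^ (m-1) * (1-p) ^ (K+1-m) - ((K+1-m : ℕ):ℝ) * p ^ m * (1-p) ^ (K-m))) p := by
    apply HasDerivAt.fun_sum
    intro m hm
    have he : K+1-m-1 = K-m := by omega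
    have h := (aux_pow_deriv (K+1-m) m p).const_mul (((K+1).choose m : ℝ) * g m)
    rw [he] at h
    exact h
  have hfun : Bern (K+1) g = fun p : ℝ => ∑ m ∈ Finset.range (K+2),
      ((K+1).choose m : ℝ) * g m * (p ^ m * (1 - p) ^ (K+1-m)) := by
    funext q
    exact Finset.sum_congr rfl fun m _ => by ring
  rw [hfun]
  convert key using 1
  -- sum identity
  rw [show (K+2) = (K+1)+1 from rfl]
  rw [Finset.sum_congr rfl (fun m (hm : m ∈ Finset.range (K+1+1)) => mul_sub
    (((K+1).choose m : ℝ) * g m) _ _), Finset.sum_sub_distrib]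
  rw [Finset.sum_range_succ' (fun m => ((K+1).choose m : ℝ) * g m *
    ((m:ℝ) * p ^ (m-1) * (1-p) ^ (K+1-m))) (K+1)]
  rw [Finset.sum_range_succ (fun m => ((K+1).choose m : ℝ) * g m *
    (((K+1-m : ℕ):ℝ) * p ^ m * (1-p) ^ (K-m))) (K+1)]
  simp only [Nat.cast_zero, Nat.sub_self, Nat.cast_ofNat, zero_mul, mul_zero, add_zero,
    Nat.cast_zero, Nat.cast_succ]
  rw [Bern, Finset.mul_sum]
  rw [← Finset.sum_sub_distrib]
  apply Finset.sum_congr rfl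
  intro m hm
  have hmK : m ≤ K := by simpa using Nat.lt_succ_iff.mp (Finset.mem_range.mp hm)
  have h1n : (K+1).choose (m+1) * (m+1) = (K+1) * K.choose m := (Nat.add_one_mul_choose_eq K m).symm
  have h2n : (K+1).choose m * (K+1-m) = (K+1) * K.choose m := by
    rw [← Nat.choose_mul_succ_eq K m, Nat.mul_comm]
  have h1 : ((K+1).choose (m+1) : ℝ) * ((m:ℝ)+1) = ((K:ℝ)+1) * (K.choose m : ℝ) := by
    exact_mod_cast congrArg (Nat.cast (R := ℝ)) h1n
  have h2 : ((K+1).choose m : ℝ) * (((K+1-m : ℕ)):ℝ) = ((K:ℝ)+1) * (K.choose m : ℝ) := by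
    have := congrArg (Nat.cast (R := ℝ)) h2n
    push_cast at this ⊢
    linarith [this]
  have he1 : (m+1) - 1 = m := rfl
  have he2 : K+1-(m+1) = K-m := by omega
  rw [he1, he2]
  linear_combination (g m * p^m * (1-p)^(K-m)) * h2 - (g (m+1) * p^m * (1-p)^(K-m)) * h1

lemma bern_nonpos (N : ℕ) (h : ℕ → ℝ) (hh : ∀ m, h m ≤ 0) {p : ℝ}
    (hp0 : 0 ≤ p) (hp1 : p ≤ 1) : Bern N h p ≤ 0 := by
  refine Finset.sum_nonpos fun m _ => ?_
  have hq : (0:ℝ) ≤ (1 - p) ^ (N - m) := pow_nonneg (by linarith) _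
  have : ((N.choose m : ℝ) * h m * p ^ m * (1 - p) ^ (N - m))
      = h m * ((N.choose m : ℝ) * p ^ m * (1 - p) ^ (N - m)) := by ring
  rw [this]
  exact mul_nonpos_iff.mpr (Or.inr ⟨hh m, by positivity⟩)

lemma bern_concave (N : ℕ) (g : ℕ → ℝ)
    (hg : ∀ m, g (m+2) - g (m+1) ≤ g (m+1) - g m) :
    ConcaveOn ℝ (Set.Icc (0:ℝ) 1) (Bern N g) := by
  match N with
  | 0 =>
    have h0 : Bern 0 g = fun _ => g 0 := by
      funext p; simp [Bern]
    rw [h0]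
    exact concaveOn_const _ (convex_Icc _ _)
  | 1 =>
    apply concaveOn_of_hasDerivWithinAt2_nonpos (convex_Icc _ _)
      (f' := fun p => (((0:ℕ):ℝ)+1) * Bern 0 (fun m => g (m+1) - g m) p)
      (f'' := fun _ => (0:ℝ)) (bern_continuous _ _).continuousOn
    · intro x _
      exact (bern_hasDerivAt 0 g x).hasDerivWithinAt
    · intro x _
      have h0 : (fun p : ℝ => (((0:ℕ):ℝ)+1) * Bern 0 (fun m => g (m+1) - g m) p)
          = fun _ : ℝ => (((0:ℕ):ℝ)+1) * (g 1 - g 0) := by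
        funext p; simp [Bern]
      rw [h0]
      exact (hasDerivAt_const _ _).hasDerivWithinAt
    · intro x _; exact le_refl _
  | (J+2) =>
    apply concaveOn_of_hasDerivWithinAt2_nonpos (convex_Icc _ _)
      (f' := fun p => (((J+1:ℕ):ℝ)+1) * Bern (J+1) (fun m => g (m+1) - g m) p)
      (f'' := fun p => (((J+1:ℕ):ℝ)+1) * ((((J:ℕ):ℝ)+1) *
        Bern J (fun m => (g (m+2) - g (m+1)) - (g (m+1) - g m)) p))
      (bern_continuous _ _).continuousOn
    · intro x _
      exact (bern_hasDerivAt (J+1) g x).hasDerivWithinAt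
    · intro x _
      exact ((bern_hasDerivAt J (fun m => g (m+1) - g m) x).const_mul
        ((((J+1:ℕ):ℝ)+1))).hasDerivWithinAt
    · intro x hx
      rw [interior_Icc] at hx
      have hb : Bern J (fun m => (g (m+2) - g (m+1)) - (g (m+1) - g m)) x ≤ 0 :=
        bern_nonpos _ _ (fun m => by have := hg m; linarith) hx.1.le hx.2.le
      have h1 : (0:ℝ) ≤ (((J+1:ℕ):ℝ)+1) := by positivity
      have h2 : (0:ℝ) ≤ (((J:ℕ):ℝ)+1) := by positivity
      exact mul_nonpos_iff.mpr (Or.inl ⟨h1, mul_nonpos_iff.mpr (Or.inl ⟨h2, hb⟩)⟩)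

lemma bern_zero (N : ℕ) (g : ℕ → ℝ) : Bern N g 0 = g 0 := by
  unfold Bern
  rw [Finset.sum_eq_single 0]
  · simp
  · intro b _ hb
    simp [zero_pow hb]
  · intro h
    exact absurd (Finset.mem_range.mpr (Nat.succ_pos N)) h

lemma bern_one (N : ℕ) (g : ℕ → ℝ) : Bern N g 1 = g N := by
  unfold Bern
  rw [Finset.sum_eq_single N]
  · simp
  · intro b hb hbN
    have : N - b ≠ 0 := by
      have := Finset.mem_range.mp hb
      omega
    simp [zero_pow this]
  · intro h
    exact absurd (Finset.mem_range.mpr (Nat.lt_succ_self N)) h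

lemma comb_pos {a b P Q : ℝ} (ha : 0 ≤ a) (hb : 0 ≤ b) (hab : a + b = 1)
    (hP : 0 < P) (hQ : 0 < Q) : 0 < a * P + b * Q := by
  have hb' : b = 1 - a := by linarith
  subst hb'
  rcases le_total P Q with h|h
  · nlinarith
  · nlinarith

/-- Zeros of `Φ(v) = p₀ + J̃(v)/δ − v` on `[0, v̄]`:
(i) if `p₀ < v̄ − ln(n−1+ω₀)/δ` there is exactly one zero, lying in `(0, v̄)`;
(ii) if `p₀ > v̄ − ln(n−1+ω₀)/δ` there is no zero;
(iii) if `p₀ = v̄ − ln(n−1+ω₀)/δ` then `v̄` is the unique zero. -/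
theorem stmt5 (n : ℕ) (hn : 2 ≤ n) (ω₀ δ p₀ vbar : ℝ) (hω : 1 < ω₀)
    (hδ : δ ∈ Set.Ioc (0 : ℝ) 1) (hp : 0 ≤ p₀) (hv : 0 < vbar) :
    (p₀ < vbar - Real.log ((n : ℝ) - 1 + ω₀) / δ →
      (∃! v, v ∈ Set.Icc (0 : ℝ) vbar ∧ p₀ + Jt n ω₀ vbar v / δ - v = 0) ∧
      ∀ v ∈ Set.Icc (0 : ℝ) vbar, p₀ + Jt n ω₀ vbar v / δ - v = 0 →
        v ∈ Set.Ioo (0 : ℝ) vbar) ∧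
    (vbar - Real.log ((n : ℝ) - 1 + ω₀) / δ < p₀ →
      ∀ v ∈ Set.Icc (0 : ℝ) vbar, p₀ + Jt n ω₀ vbar v / δ - v ≠ 0) ∧
    (p₀ = vbar - Real.log ((n : ℝ) - 1 + ω₀) / δ →
      ∀ v ∈ Set.Icc (0 : ℝ) vbar, (p₀ + Jt n ω₀ vbar v / δ - v = 0 ↔ v = vbar)) := by
  obtain ⟨hδ0, hδ1⟩ := hδ
  have hg : ∀ v, Jt n ω₀ vbar v
      = Bern (n-1) (fun m => Real.log ((m:ℝ) + ω₀)) (v / vbar) := by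
    intro v
    obtain ⟨K, rfl⟩ : ∃ K, n = K + 1 := ⟨n-1, by omega⟩
    unfold Jt Bern
    simp [Nat.add_sub_cancel]
  have hconc : ConcaveOn ℝ (Set.Icc (0:ℝ) 1)
      (Bern (n-1) (fun m => Real.log ((m:ℝ) + ω₀))) := by
    apply bern_concave
    intro m
    have hc : (0:ℝ) ≤ (m:ℝ) := Nat.cast_nonneg m
    push_cast
    have key : Real.log (((m:ℝ)+ω₀) * ((m:ℝ)+2+ω₀))
        ≤ Real.log ((((m:ℝ)+1+ω₀))*(((m:ℝ)+1+ω₀))) := by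
      apply Real.log_le_log (by nlinarith)
      nlinarith
    rw [Real.log_mul (by nlinarith) (by nlinarith),
        Real.log_mul (by nlinarith) (by nlinarith)] at key
    linarith
  -- key concavity combination inequality for Φ
  have hkey : ∀ x y a b : ℝ, x ∈ Set.Icc (0:ℝ) vbar → y ∈ Set.Icc (0:ℝ) vbar →
      0 ≤ a → 0 ≤ b → a + b = 1 →
      a * (p₀ + Jt n ω₀ vbar x / δ - x) + b * (p₀ + Jt n ω₀ vbar y / δ - y)
        ≤ p₀ + Jt n ω₀ vbar (a*x + b*y) / δ - (a*x + b*y) := by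
    intro x y a b hx hy ha hb hab
    have hx1 : x / vbar ∈ Set.Icc (0:ℝ) 1 :=
      ⟨div_nonneg hx.1 hv.le, (div_le_one hv).mpr hx.2⟩
    have hy1 : y / vbar ∈ Set.Icc (0:ℝ) 1 :=
      ⟨div_nonneg hy.1 hv.le, (div_le_one hv).mpr hy.2⟩
    have hB := hconc.2 hx1 hy1 ha hb hab
    simp only [smul_eq_mul] at hB
    have hdiv : (a*x + b*y)/vbar = a * (x/vbar) + b * (y/vbar) := by
      field_simp
    rw [hg, hg, hg, hdiv]
    have h3 : (a * Bern (n-1) (fun m => Real.log ((m:ℝ) + ω₀)) (x/vbar)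
        + b * Bern (n-1) (fun m => Real.log ((m:ℝ) + ω₀)) (y/vbar)) / δ
        ≤ Bern (n-1) (fun m => Real.log ((m:ℝ) + ω₀)) (a*(x/vbar) + b*(y/vbar)) / δ :=
      (div_le_div_iff_of_pos_right hδ0).mpr hB
    have e1 : a * (p₀ + Bern (n-1) (fun m => Real.log ((m:ℝ) + ω₀)) (x/vbar) / δ - x)
        + b * (p₀ + Bern (n-1) (fun m => Real.log ((m:ℝ) + ω₀)) (y/vbar) / δ - y)
        = (a+b)*p₀ + (a * Bern (n-1) (fun m => Real.log ((m:ℝ) + ω₀)) (x/vbar)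
            + b * Bern (n-1) (fun m => Real.log ((m:ℝ) + ω₀)) (y/vbar)) / δ
          - (a*x + b*y) := by
      field_simp
      ring
    rw [e1, hab, one_mul]
    linarith
  have hJ0 : Jt n ω₀ vbar 0 = Real.log ω₀ := by
    rw [hg]
    rw [zero_div, bern_zero]
    norm_num
  have hJ1 : Jt n ω₀ vbar vbar = Real.log ((n:ℝ) - 1 + ω₀) := by
    rw [hg, div_self hv.ne', bern_one]
    congr 1
    rw [Nat.cast_sub (by omega : 1 ≤ n)]
    norm_num
  have hΦ0 : 0 < p₀ + Jt n ω₀ vbar 0 / δ - 0 := by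
    rw [hJ0]
    have := div_pos (Real.log_pos hω) hδ0
    linarith
  have hΦv : p₀ + Jt n ω₀ vbar vbar / δ - vbar
      = p₀ - (vbar - Real.log ((n:ℝ) - 1 + ω₀) / δ) := by
    rw [hJ1]; ring
  -- combination with endpoints 0 and vbar
  have hcomb : ∀ v ∈ Set.Icc (0:ℝ) vbar,
      ((vbar - v)/vbar) * (p₀ + Jt n ω₀ vbar 0 / δ - 0)
        + (v/vbar) * (p₀ + Jt n ω₀ vbar vbar / δ - vbar)
        ≤ p₀ + Jt n ω₀ vbar v / δ - v := by
    intro v hvI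
    have ha : 0 ≤ (vbar - v)/vbar := div_nonneg (by linarith [hvI.2]) hv.le
    have hb : 0 ≤ v/vbar := div_nonneg hvI.1 hv.le
    have hab : (vbar - v)/vbar + v/vbar = 1 := by field_simp; ring
    have h := hkey 0 vbar ((vbar - v)/vbar) (v/vbar)
      ⟨le_refl 0, hv.le⟩ ⟨hv.le, le_refl vbar⟩ ha hb hab
    have he : (vbar - v)/vbar * 0 + v/vbar * vbar = v := by field_simp; ring
    rwa [he] at h
  -- every zero is positive
  have hzero_pos : ∀ v ∈ Set.Icc (0:ℝ) vbar,
      p₀ + Jt n ω₀ vbar v / δ - v = 0 → 0 < v := by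
    intro v hvI hz
    rcases eq_or_lt_of_le hvI.1 with h|h
    · exfalso; rw [← h] at hz; linarith
    · exact h
  -- two distinct zeros impossible (general concavity argument)
  have hlt : ∀ x y, x ∈ Set.Icc (0:ℝ) vbar → y ∈ Set.Icc (0:ℝ) vbar → x < y →
      p₀ + Jt n ω₀ vbar x / δ - x = 0 → p₀ + Jt n ω₀ vbar y / δ - y = 0 → False := by
    intro x y hxI hyI hxy hzx hzy
    have hx0 : 0 < x := hzero_pos x hxI hzx
    have hy0 : 0 < y := lt_trans hx0 hxy
    have ha : 0 ≤ (y - x)/y := div_nonneg (by linarith) hy0.le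
    have hapos : 0 < (y - x)/y := div_pos (by linarith) hy0
    have hb : 0 ≤ x/y := div_nonneg hx0.le hy0.le
    have hab : (y - x)/y + x/y = 1 := by field_simp; ring
    have h := hkey 0 y ((y - x)/y) (x/y) ⟨le_refl 0, hv.le⟩ hyI ha hb hab
    have he : (y - x)/y * 0 + x/y * y = x := by field_simp; ring
    rw [he, hzy, hzx, mul_zero, add_zero] at h
    nlinarith
  have huniq : ∀ x y, x ∈ Set.Icc (0:ℝ) vbar → y ∈ Set.Icc (0:ℝ) vbar →
      p₀ + Jt n ω₀ vbar x / δ - x = 0 → p₀ + Jt n ω₀ vbar y / δ - y = 0 → x = y := by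
    intro x y hxI hyI hzx hzy
    rcases lt_trichotomy x y with h|h|h
    · exact absurd (hlt x y hxI hyI h hzx hzy) not_false
    · exact h
    · exact absurd (hlt y x hyI hxI h hzy hzx) not_false
  have hcont : Continuous (fun v => p₀ + Jt n ω₀ vbar v / δ - v) := by
    have hfe : (fun v => p₀ + Jt n ω₀ vbar v / δ - v)
        = fun v => p₀ + Bern (n-1) (fun m => Real.log ((m:ℝ) + ω₀)) (v/vbar) / δ - v :=
      funext fun v => by rw [hg]
    rw [hfe]
    exact (continuous_const.add (((bern_continuous _ _).comp
      (continuous_id.div_const vbar)).div_const δ)).sub continuous_id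
  refine ⟨?_, ?_, ?_⟩
  · -- case (i)
    intro hplt
    have hΦvneg : p₀ + Jt n ω₀ vbar vbar / δ - vbar < 0 := by rw [hΦv]; linarith
    have hiv := intermediate_value_Ioo' hv.le hcont.continuousOn
      (a := 0) (b := vbar) (f := fun v => p₀ + Jt n ω₀ vbar v / δ - v)
    obtain ⟨c, hcI, hc0⟩ := hiv ⟨hΦvneg, hΦ0⟩
    refine ⟨⟨c, ⟨⟨hcI.1.le, hcI.2.le⟩, hc0⟩, ?_⟩, ?_⟩
    · intro y hy
      exact huniq y c hy.1 ⟨hcI.1.le, hcI.2.le⟩ hy.2 hc0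
    · intro v hvI hz
      refine ⟨hzero_pos v hvI hz, ?_⟩
      rcases lt_or_eq_of_le hvI.2 with h|h
      · exact h
      · exfalso; rw [h] at hz; linarith
  · -- case (ii)
    intro hpgt v hvI hz
    have hΦvpos : 0 < p₀ + Jt n ω₀ vbar vbar / δ - vbar := by rw [hΦv]; linarith
    have ha : 0 ≤ (vbar - v)/vbar := div_nonneg (by linarith [hvI.2]) hv.le
    have hb : 0 ≤ v/vbar := div_nonneg hvI.1 hv.le
    have hab : (vbar - v)/vbar + v/vbar = 1 := by field_simp; ring
    have hpos := comb_pos ha hb hab hΦ0 hΦvpos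
    have h := hcomb v hvI
    rw [hz] at h
    linarith
  · -- case (iii)
    intro hpeq v hvI
    have hΦv0 : p₀ + Jt n ω₀ vbar vbar / δ - vbar = 0 := by rw [hΦv, hpeq]; ring
    constructor
    · intro hz
      rcases lt_or_eq_of_le hvI.2 with h|h
      · exfalso
        have hapos : 0 < (vbar - v)/vbar := div_pos (by linarith) hv
        have hcb := hcomb v hvI
        rw [hz, hΦv0, mul_zero, add_zero] at hcb
        nlinarith
      · exact h
    · intro h
      rw [h]
      exact hΦv0
end
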